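/- Let G be a finite group, N ≤ G a subgroup of index 2, and I a finite G-set of even cardinality r with r′ orbits, such that N acts transitively on each G-orbit of I and every G-orbit of I has even cardinality. Let M be the G-lattice with ℤ-basis {e_i : i ∈ I} ∪ {f, g} and G-action given by: for σ ∈ N, σ·e_i = e_{σ·i}, σ·f = f, σ·g = g; for σ ∈ G∖N, σ·e_i = −e_{σ·i} + g, σ·f = f − Σ_{i∈I} e_i + (r/2)·g, σ·g = g. Let Z = {x ∈ M : Σ_{σ∈G} σ·x = 0} and let B be the ℤ-submodule of M generated by {σ·x − x : σ ∈ G, x ∈ M}. Then Z/B is isomorphic as an abelian group to (ℤ/2ℤ)^{r′−1}. -/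

import Mathlib

open Finset MulAction

lemma aux_stab (G : Type) [Group G] [Fintype G] (N : Subgroup G) (hN : N.index = 2)
    (I : Type) [MulAction G I]
    (htrans : ∀ i j : I, j ∈ MulAction.orbit G i → ∃ σ ∈ N, σ • i = j)
    (i : I) : ∃ τ : G, τ ∉ N ∧ τ • i = i := by
  by_contra h
  push_neg at h
  have hsub : ∀ τ : G, τ • i = i → τ ∈ N := by
    intro τ hτ
    by_contra hn
    exact h τ hn hτ
  have horb : MulAction.orbit N i = MulAction.orbit G i := by
    ext j
    constructor
    · rintro ⟨⟨σ, hσ⟩, rfl⟩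
      exact ⟨σ, rfl⟩
    · rintro hj
      obtain ⟨σ, hσ, rfl⟩ := htrans i j hj
      exact ⟨⟨σ, hσ⟩, rfl⟩
  have c1 : Nat.card (MulAction.orbit G i) * Nat.card (MulAction.stabilizer G i) = Nat.card G := by
    rw [← Nat.card_prod]
    exact Nat.card_congr (MulAction.orbitProdStabilizerEquivGroup G i)
  have c2 : Nat.card (MulAction.orbit N i) * Nat.card (MulAction.stabilizer N i) = Nat.card N := by
    rw [← Nat.card_prod]
    exact Nat.card_congr (MulAction.orbitProdStabilizerEquivGroup N i)
  have estab : MulAction.stabilizer N i ≃ MulAction.stabilizer G i :=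
    { toFun := fun x => ⟨(x.1 : G), x.2⟩
      invFun := fun x => ⟨⟨x.1, hsub x.1 x.2⟩, x.2⟩
      left_inv := fun x => by ext; rfl
      right_inv := fun x => by ext; rfl }
  rw [horb, Nat.card_congr estab, c1] at c2
  have hGN : Nat.card G = 2 * Nat.card N := by
    rw [← Subgroup.index_mul_card N, hN]
  have hpos : 0 < Nat.card N := Nat.card_pos
  omega

lemma aux_count (G : Type) [Group G] [Fintype G] (N : Subgroup G) (hN : N.index = 2)
    (I : Type) [MulAction G I]
    (htrans : ∀ i j : I, j ∈ MulAction.orbit G i → ∃ σ ∈ N, σ • i = j)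
    (i l : I) [DecidablePred (· ∈ N)] [DecidableEq I] :
    (Finset.univ.filter fun σ : G => σ ∈ N ∧ σ • i = l).card
      = (Finset.univ.filter fun σ : G => σ ∉ N ∧ σ • i = l).card := by
  obtain ⟨τ, hτN, hτ⟩ := aux_stab G N hN I htrans i
  apply Finset.card_bij (fun σ _ => σ * τ)
  · intro σ hσ
    simp only [Finset.mem_filter, Finset.mem_univ, true_and] at hσ ⊢
    refine ⟨fun hmem => hτN ?_, by rw [mul_smul, hτ, hσ.2]⟩
    exact ((Subgroup.mul_mem_iff_of_index_two hN).1 hmem).1 hσ.1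
  · intro σ₁ _ σ₂ _ hh
    exact mul_right_cancel hh
  · intro σ' hσ'
    simp only [Finset.mem_filter, Finset.mem_univ, true_and] at hσ'
    refine ⟨σ' * τ⁻¹, ?_, by group⟩
    simp only [Finset.mem_filter, Finset.mem_univ, true_and]
    constructor
    · rw [Subgroup.mul_mem_iff_of_index_two hN]
      simp [hσ'.1, hτN]
    · rw [mul_smul, ← hσ'.2]
      congr 1
      rw [inv_smul_eq_iff, hτ]

noncomputable def auxE (I : Type) [DecidableEq I] (i : I) : (I → ℤ) × ℤ × ℤ :=
  (fun j => if j = i then 1 else 0, 0, 0)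

noncomputable def auxGg (I : Type) : (I → ℤ) × ℤ × ℤ := (0, 0, 1)

noncomputable def auxH (I : Type) [DecidableEq I] (i : I) : (I → ℤ) × ℤ × ℤ :=
  (fun j => if j = i then -2 else 0, 0, 1)

set_option maxHeartbeats 1000000 in
/-- Tate cohomology `Ĥ⁻¹` of the lattice `M = ⟨e_i (i ∈ I), f, g⟩` with
`σ·e_i = e_{σi}`, `σ·f = f`, `σ·g = g` for `σ ∈ N`, and `σ·e_i = −e_{σi} + g`,
`σ·f = f − ∑ e_i + (r/2)g`, `σ·g = g` for `σ ∉ N`, where `|I| = r` is even,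
`N` (of index 2) acts transitively on each `G`-orbit, and every orbit has even
cardinality: `Z/B ≅ (ℤ/2ℤ)^{r′−1}` with `r′` the number of orbits.
Here `M` is realised as `(I → ℤ) × ℤ × ℤ`, with `e_i` the indicator of `i`,
`f = (0, 1, 0)` and `g = (0, 0, 1)`. -/
theorem tate_neg_one_even_case_all_orbits_even
    (G : Type) [Group G] [Fintype G] (N : Subgroup G) (hN : N.index = 2)
    (I : Type) [Fintype I] [MulAction G I]
    (r r' : ℕ) (hr : Fintype.card I = r) (heven : Even r)
    (hr' : Nat.card (MulAction.orbitRel.Quotient G I) = r')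
    (htrans : ∀ i j : I, j ∈ MulAction.orbit G i → ∃ σ ∈ N, σ • i = j)
    (horb : ∀ i : I, Even (Nat.card (MulAction.orbit G i)))
    (ρ : Representation ℤ G ((I → ℤ) × ℤ × ℤ))
    (hρN : ∀ σ ∈ N, ∀ (v : I → ℤ) (c d : ℤ),
      ρ σ (v, c, d) = (fun j => v (σ⁻¹ • j), c, d))
    (hρ : ∀ σ ∉ N, ∀ (v : I → ℤ) (c d : ℤ),
      ρ σ (v, c, d) =
        (fun j => -v (σ⁻¹ • j) - c, c, (∑ i : I, v i) + c * ((r : ℤ) / 2) + d)) :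
    Nonempty
      ((LinearMap.ker (∑ σ : G, ρ σ) ⧸
        (Submodule.span ℤ
          {x : (I → ℤ) × ℤ × ℤ | ∃ σ : G, ∃ y, x = ρ σ y - y}).comap
          (LinearMap.ker (∑ σ : G, ρ σ)).subtype) ≃+
      (Fin (r' - 1) → ZMod 2)) := by
  classical
  set T : ((I → ℤ) × ℤ × ℤ) →ₗ[ℤ] ((I → ℤ) × ℤ × ℤ) := (∑ σ : G, ρ σ) with hTdef
  -- component formulas
  have hfst : ∀ (σ : G) (v : I → ℤ) (c d : ℤ) (j : I),
      (ρ σ (v, c, d)).1 j = if σ ∈ N then v (σ⁻¹ • j) else -v (σ⁻¹ • j) - c := by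
    intro σ v c d j
    by_cases hσ : σ ∈ N
    · rw [hρN σ hσ, if_pos hσ]
    · rw [hρ σ hσ, if_neg hσ]
  have hsnd : ∀ (σ : G) (v : I → ℤ) (c d : ℤ), (ρ σ (v, c, d)).2.1 = c := by
    intro σ v c d
    by_cases hσ : σ ∈ N
    · rw [hρN σ hσ]
    · rw [hρ σ hσ]
  have hthd : ∀ (σ : G) (v : I → ℤ) (c d : ℤ),
      (ρ σ (v, c, d)).2.2 = if σ ∈ N then d
        else (∑ i : I, v i) + c * ((r : ℤ) / 2) + d := by
    intro σ v c d
    by_cases hσ : σ ∈ N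
    · rw [hρN σ hσ, if_pos hσ]
    · rw [hρ σ hσ, if_neg hσ]
  -- cardinalities
  have hcardN : (Finset.univ.filter fun σ : G => σ ∈ N).card = Nat.card N := by
    rw [Nat.card_eq_fintype_card, Fintype.card_subtype]
  have hGcard : Fintype.card G = 2 * Nat.card N := by
    rw [← Nat.card_eq_fintype_card, ← Subgroup.index_mul_card N, hN]
  have hNpos : 0 < Nat.card N := Nat.card_pos
  have hcardNot : (Finset.univ.filter fun σ : G => σ ∉ N).card = Nat.card N := by
    have h2 := Finset.card_filter_add_card_filter_not
      (s := (Finset.univ : Finset G)) (p := fun σ : G => σ ∈ N)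
    rw [Finset.card_univ] at h2
    omega
  -- sum over a filter, reindexed by inverse
  have hinv : ∀ (v : I → ℤ) (j : I) (p : G → Prop) (_ : DecidablePred p)
      (hp : ∀ σ : G, p σ ↔ p σ⁻¹),
      (∑ σ ∈ Finset.univ.filter p, v (σ⁻¹ • j))
        = ∑ σ ∈ Finset.univ.filter p, v (σ • j) := by
    intro v j p _ hp
    refine Finset.sum_nbij' (fun σ => σ⁻¹) (fun σ => σ⁻¹) ?_ ?_ ?_ ?_ ?_
    · intro σ hσ
      simp only [Finset.mem_filter, Finset.mem_univ, true_and] at hσ ⊢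
      exact (hp σ).1 hσ
    · intro σ hσ
      simp only [Finset.mem_filter, Finset.mem_univ, true_and] at hσ ⊢
      rw [hp]
      simpa using hσ
    · intro σ _; simp
    · intro σ _; simp
    · intro σ _; rfl
  -- sum over a filter, grouped by fibers
  have hgroup : ∀ (v : I → ℤ) (j : I) (s : Finset G),
      (∑ σ ∈ s, v (σ • j))
        = ∑ i : I, ((s.filter fun σ => σ • j = i).card : ℤ) * v i := by
    intro v j s
    rw [← Finset.sum_fiberwise_of_maps_to (g := fun σ : G => σ • j)
      (fun σ _ => Finset.mem_univ _) (fun σ => v (σ • j))]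
    refine Finset.sum_congr rfl fun i _ => ?_
    rw [Finset.sum_congr rfl (fun σ hσ => congrArg v (Finset.mem_filter.1 hσ).2),
      Finset.sum_const, nsmul_eq_mul]
  have hhalf : ∀ (v : I → ℤ) (j : I),
      (∑ σ ∈ Finset.univ.filter fun σ : G => σ ∈ N, v (σ⁻¹ • j))
        = ∑ σ ∈ Finset.univ.filter fun σ : G => σ ∉ N, v (σ⁻¹ • j) := by
    intro v j
    rw [hinv v j _ inferInstance (fun σ => by simp),
        hinv v j _ inferInstance (fun σ => by simp),
        hgroup, hgroup]
    refine Finset.sum_congr rfl fun i _ => ?_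
    congr 2
    rw [Finset.filter_filter, Finset.filter_filter]
    exact aux_count G N hN I htrans j i
  -- kernel membership criterion
  have hker_iff : ∀ (v : I → ℤ) (c d : ℤ),
      ((v, c, d) ∈ LinearMap.ker T) ↔ (c = 0 ∧ (∑ i : I, v i) + 2 * d = 0) := by
    intro v c d
    rw [LinearMap.mem_ker]
    have hT : T (v, c, d) = ∑ σ : G, ρ σ (v, c, d) := by
      rw [hTdef]; exact LinearMap.sum_apply _ _ _
    constructor
    · intro h0
      have h2 : (T (v, c, d)).2.1 = 0 := by rw [h0]; rfl
      have h3 : (T (v, c, d)).2.2 = 0 := by rw [h0]; rfl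
      rw [hT, Prod.snd_sum, Prod.fst_sum] at h2
      rw [hT, Prod.snd_sum, Prod.snd_sum] at h3
      have hc : c = 0 := by
        rw [Finset.sum_congr rfl (fun σ _ => hsnd σ v c d), Finset.sum_const,
          Finset.card_univ, nsmul_eq_mul] at h2
        have : (Fintype.card G : ℤ) ≠ 0 := by
          simp [Fintype.card_ne_zero]
        exact (mul_eq_zero.1 h2).resolve_left this
      refine ⟨hc, ?_⟩
      subst hc
      rw [Finset.sum_congr rfl (fun σ _ => hthd σ v 0 d), Finset.sum_ite,
        Finset.sum_const, Finset.sum_const, hcardN, hcardNot, nsmul_eq_mul, nsmul_eq_mul] at h3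
      have hn0 : (0:ℤ) < (Nat.card N : ℤ) := by exact_mod_cast hNpos
      nlinarith [h3]
    · intro ⟨hc, hd⟩
      subst hc
      rw [hT]
      refine Prod.ext ?_ (Prod.ext ?_ ?_)
      · rw [Prod.fst_sum]
        funext j
        rw [Finset.sum_apply]
        rw [Finset.sum_congr rfl (fun σ _ => hfst σ v 0 d j), Finset.sum_ite]
        simp only [sub_zero]
        rw [Finset.sum_neg_distrib, ← hhalf v j]
        show (∑ σ ∈ _, v (σ⁻¹ • j)) + -(∑ σ ∈ _, v (σ⁻¹ • j)) = (0 : ((I → ℤ) × ℤ × ℤ)).1 j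
        rw [add_neg_cancel]
        rfl
      · rw [Prod.snd_sum, Prod.fst_sum,
          Finset.sum_congr rfl (fun σ _ => hsnd σ v 0 d), Finset.sum_const]
        simp
      · rw [Prod.snd_sum, Prod.snd_sum,
          Finset.sum_congr rfl (fun σ _ => hthd σ v 0 d), Finset.sum_ite,
          Finset.sum_const, Finset.sum_const, hcardN, hcardNot,
          nsmul_eq_mul, nsmul_eq_mul]
        show (Nat.card N : ℤ) * d + (Nat.card N : ℤ) * ((∑ i : I, v i) + 0 * ((r:ℤ)/2) + d) = (0 : ((I → ℤ) × ℤ × ℤ)).2.2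
        have : (0 : ((I → ℤ) × ℤ × ℤ)).2.2 = 0 := rfl
        rw [this]
        nlinarith [hd]
  -- the orbit quotient
  let Q := MulAction.orbitRel.Quotient G I
  have hQfin : Fintype Q := Fintype.ofFinite Q
  have hmk : ∀ (σ : G) (i : I), (Quotient.mk'' (σ • i) : Q) = Quotient.mk'' i :=
    fun σ i => Quotient.sound' ⟨σ, rfl⟩
  have hfib_even : ∀ q : Q,
      Even (Finset.univ.filter fun i : I => (Quotient.mk'' i : Q) = q).card := by
    intro q
    have h1 : (Finset.univ.filter fun i : I => (Quotient.mk'' i : Q) = q).card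
        = Nat.card q.orbit := by
      have h2 : q.orbit = {i : I | (Quotient.mk'' i : Q) = q} :=
        Set.ext fun i => MulAction.orbitRel.Quotient.mem_orbit
      rw [h2, Nat.card_eq_fintype_card, Fintype.card_subtype]
      refine congrArg Finset.card (Finset.filter_congr fun i _ => ?_)
      simp [Set.mem_setOf_eq]
    rw [h1]
    induction q using Quotient.inductionOn' with
    | h a => exact horb a
  -- the reduction map φ
  let φ : ((I → ℤ) × ℤ × ℤ) →ₗ[ℤ] (Q → ZMod 2) :=
    { toFun := fun x q => ∑ i : I, if (Quotient.mk'' i : Q) = q then ((x.1 i : ℤ) : ZMod 2) else 0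
      map_add' := by
        intro x y
        funext q
        show (∑ i : I, if (Quotient.mk'' i : Q) = q then (((x + y).1 i : ℤ) : ZMod 2) else 0)
            = (∑ i : I, if (Quotient.mk'' i : Q) = q then ((x.1 i : ℤ) : ZMod 2) else 0)
              + ∑ i : I, if (Quotient.mk'' i : Q) = q then ((y.1 i : ℤ) : ZMod 2) else 0
        rw [← Finset.sum_add_distrib]
        refine Finset.sum_congr rfl fun i _ => ?_
        have hxy : (x + y).1 i = x.1 i + y.1 i := rfl
        rw [hxy]
        split_ifs <;> push_cast <;> ring
      map_smul' := by
        intro z x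
        funext q
        show (∑ i : I, if (Quotient.mk'' i : Q) = q then (((z • x).1 i : ℤ) : ZMod 2) else 0)
            = z • ∑ i : I, if (Quotient.mk'' i : Q) = q then ((x.1 i : ℤ) : ZMod 2) else 0
        conv_rhs => rw [zsmul_eq_mul]
        rw [Finset.mul_sum]
        refine Finset.sum_congr rfl fun i _ => ?_
        have hzx : (z • x).1 i = z * x.1 i := rfl
        rw [hzx]
        split_ifs <;> push_cast <;> ring }
  have hφdef : ∀ (x : (I → ℤ) × ℤ × ℤ) (q : Q),
      φ x q = ∑ i : I, if (Quotient.mk'' i : Q) = q then ((x.1 i : ℤ) : ZMod 2) else 0 :=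
    fun x q => rfl
  -- span generators
  have hEρN : ∀ σ ∈ N, ∀ i : I, ρ σ (auxE I i) = auxE I (σ • i) := by
    intro σ hσ i
    rw [show (auxE I i) = ((fun j => if j = i then (1:ℤ) else 0), (0:ℤ), (0:ℤ)) from rfl,
      hρN σ hσ]
    refine Prod.ext ?_ rfl
    funext j
    show (if σ⁻¹ • j = i then (1:ℤ) else 0) = if j = σ • i then 1 else 0
    simp [inv_smul_eq_iff, eq_inv_smul_iff, eq_comm]
  have hEρnN : ∀ σ ∉ N, ∀ i : I,
      ρ σ (auxE I i) = (fun j => -(if j = σ • i then (1:ℤ) else 0), 0, 1) := by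
    intro σ hσ i
    rw [show (auxE I i) = ((fun j => if j = i then (1:ℤ) else 0), (0:ℤ), (0:ℤ)) from rfl,
      hρ σ hσ]
    refine Prod.ext ?_ (Prod.ext rfl ?_)
    · funext j
      show -(if σ⁻¹ • j = i then (1:ℤ) else 0) - 0 = -(if j = σ • i then (1:ℤ) else 0)
      rw [sub_zero]
      congr 1
      simp [inv_smul_eq_iff, eq_inv_smul_iff, eq_comm]
    · show (∑ l : I, if l = i then (1:ℤ) else 0) + 0 * ((r:ℤ)/2) + 0 = 1
      simp
  -- the span B
  set Bsp := Submodule.span ℤ {x : (I → ℤ) × ℤ × ℤ | ∃ σ : G, ∃ y, x = ρ σ y - y} with hBdef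
  have hgen : ∀ (σ : G) (y : (I → ℤ) × ℤ × ℤ), ρ σ y - y ∈ Bsp :=
    fun σ y => Submodule.subset_span ⟨σ, y, rfl⟩
  have hEdiff_mem : ∀ i j : I, j ∈ MulAction.orbit G i → auxE I j - auxE I i ∈ Bsp := by
    intro i j hj
    obtain ⟨σ, hσ, rfl⟩ := htrans i j hj
    rw [← hEρN σ hσ i]
    exact hgen σ (auxE I i)
  have hH_mem : ∀ i : I, auxH I i ∈ Bsp := by
    intro i
    obtain ⟨τ, hτ, hτi⟩ := aux_stab G N hN I htrans i
    have h2 : ρ τ (auxE I i) - auxE I i = auxH I i := by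
      rw [hEρnN τ hτ i, hτi]
      refine Prod.ext ?_ (Prod.ext (by show (0:ℤ) - 0 = 0; ring) (by show (1:ℤ) - 0 = 1; ring))
      funext j
      show -(if j = i then (1:ℤ) else 0) - (if j = i then 1 else 0) = if j = i then -2 else 0
      split_ifs <;> ring
    rw [← h2]
    exact hgen τ (auxE I i)
  have hout_orbit : ∀ i : I, (Quotient.out (Quotient.mk'' i : Q)) ∈ MulAction.orbit G i := by
    intro i
    have h := Quotient.exact' (Quotient.out_eq' (Quotient.mk'' i : Q))
    rwa [MulAction.orbitRel_apply] at h
  -- decomposition of basis sums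
  have hA : ∀ w : I → ℤ, (∑ i : I, w i • auxE I i) = (w, (0:ℤ), (0:ℤ)) := by
    intro w
    refine Prod.ext ?_ (Prod.ext ?_ ?_)
    · rw [Prod.fst_sum]
      funext j
      rw [Finset.sum_apply]
      rw [Finset.sum_congr rfl (fun i _ => show (w i • auxE I i).1 j = if j = i then w i else 0
        from by show w i * (if j = i then (1:ℤ) else 0) = _; split_ifs <;> ring)]
      rw [Finset.sum_ite_eq]
      simp
    · rw [Prod.snd_sum, Prod.fst_sum]
      rw [Finset.sum_congr rfl (fun i _ => show (w i • auxE I i).2.1 = 0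
        from by show w i * 0 = 0; ring)]
      exact Finset.sum_const_zero
    · rw [Prod.snd_sum, Prod.snd_sum]
      rw [Finset.sum_congr rfl (fun i _ => show (w i • auxE I i).2.2 = 0
        from by show w i * 0 = 0; ring)]
      exact Finset.sum_const_zero
  -- the crux decomposition
  have hcrux : ∀ (v : I → ℤ) (d : ℤ), ((∑ i : I, v i) + 2 * d = 0) →
      (∀ q : Q, ((((∑ i ∈ Finset.univ.filter
        (fun i : I => (Quotient.mk'' i : Q) = q), v i) : ℤ) : ZMod 2) = 0)) →
      (v, (0:ℤ), d) ∈ Bsp := by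
    intro v d hsum hphi
    have hdvd : ∀ q : Q, ∃ tq : ℤ, (∑ i ∈ Finset.univ.filter
        (fun i : I => (Quotient.mk'' i : Q) = q), v i) = 2 * tq := by
      intro q
      have h := (ZMod.intCast_zmod_eq_zero_iff_dvd _ 2).1 (hphi q)
      obtain ⟨c, hc⟩ := h
      exact ⟨c, by exact_mod_cast hc⟩
    choose t ht using hdvd
    have htot : (∑ q : Q, ∑ i ∈ Finset.univ.filter
        (fun i : I => (Quotient.mk'' i : Q) = q), v i) = ∑ i : I, v i :=
      Finset.sum_fiberwise_of_maps_to (fun i _ => Finset.mem_univ _) v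
    have hsumt : ∑ q : Q, t q = -d := by
      have h1 : (∑ q : Q, (2 * t q)) = ∑ i : I, v i := by
        rw [← htot]
        exact Finset.sum_congr rfl fun q _ => (ht q).symm
      rw [← Finset.mul_sum] at h1
      omega
    have hsplit : (∑ i : I, v i • auxE I i)
        = (∑ i : I, v i • (auxE I i - auxE I (Quotient.out (Quotient.mk'' i : Q))))
          + ∑ i : I, v i • auxE I (Quotient.out (Quotient.mk'' i : Q)) := by
      rw [← Finset.sum_add_distrib]
      refine Finset.sum_congr rfl fun i _ => ?_
      rw [smul_sub]
      abel
    have hB : (∑ i : I, v i • auxE I (Quotient.out (Quotient.mk'' i : Q)))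
        = ∑ q : Q, (∑ i ∈ Finset.univ.filter
            (fun i : I => (Quotient.mk'' i : Q) = q), v i) • auxE I (Quotient.out q) := by
      rw [← Finset.sum_fiberwise_of_maps_to (g := fun i : I => (Quotient.mk'' i : Q))
        (fun i _ => Finset.mem_univ _)
        (fun i => v i • auxE I (Quotient.out (Quotient.mk'' i : Q)))]
      refine Finset.sum_congr rfl fun q _ => ?_
      rw [Finset.sum_smul]
      refine Finset.sum_congr rfl fun i hi => ?_
      rw [(Finset.mem_filter.1 hi).2]
    have hC : (∑ q : Q, (∑ i ∈ Finset.univ.filter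
          (fun i : I => (Quotient.mk'' i : Q) = q), v i) • auxE I (Quotient.out q))
          + d • auxGg I
        = ∑ q : Q, (-(t q)) • auxH I (Quotient.out q) := by
      have h1 : ∀ q : Q, (∑ i ∈ Finset.univ.filter
          (fun i : I => (Quotient.mk'' i : Q) = q), v i) • auxE I (Quotient.out q)
          = t q • auxGg I + (-(t q)) • auxH I (Quotient.out q) := by
        intro q
        rw [ht q]
        refine Prod.ext ?_ (Prod.ext ?_ ?_)
        · funext l
          show (2 * t q) * (if l = (Quotient.out q) then (1:ℤ) else 0)
            = t q * 0 + (-(t q)) * (if l = (Quotient.out q) then -2 else 0)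
          split_ifs <;> ring
        · show (2 * t q) * 0 = t q * 0 + (-(t q)) * 0
          ring
        · show (2 * t q) * 0 = t q * 1 + (-(t q)) * 1
          ring
      rw [Finset.sum_congr rfl fun q _ => h1 q, Finset.sum_add_distrib, ← Finset.sum_smul,
        hsumt, neg_smul]
      abel
    have key : (v, (0:ℤ), d)
        = (∑ i : I, v i • (auxE I i - auxE I (Quotient.out (Quotient.mk'' i : Q))))
          + ∑ q : Q, (-(t q)) • auxH I (Quotient.out q) := by
      rw [← hC, ← hB, ← add_assoc, ← hsplit, hA]
      refine Prod.ext ?_ (Prod.ext ?_ ?_)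
      · show v = v + d • (0 : I → ℤ)
        simp
      · show (0:ℤ) = 0 + d * 0
        ring
      · show d = 0 + d * 1
        ring
    rw [key]
    refine Submodule.add_mem _ ?_ ?_
    · refine Submodule.sum_mem _ fun i _ => Submodule.smul_mem _ _ ?_
      have h := Submodule.neg_mem _ (hEdiff_mem i _ (hout_orbit i))
      rwa [neg_sub] at h
    · exact Submodule.sum_mem _ fun q _ => Submodule.smul_mem _ _ (hH_mem _)
  -- cast description of φ
  have hφcast : ∀ (x : (I → ℤ) × ℤ × ℤ) (q : Q),
      φ x q = (((∑ i ∈ Finset.univ.filter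
        (fun i : I => (Quotient.mk'' i : Q) = q), x.1 i) : ℤ) : ZMod 2) := by
    intro x q
    rw [hφdef, ← Finset.sum_filter, Int.cast_sum]
  have hbij : ∀ (σ : G) (q : Q) (f : I → ZMod 2),
      (∑ i ∈ Finset.univ.filter (fun i : I => (Quotient.mk'' i : Q) = q), f (σ⁻¹ • i))
        = ∑ i ∈ Finset.univ.filter (fun i : I => (Quotient.mk'' i : Q) = q), f i := by
    intro σ q f
    refine Finset.sum_nbij' (fun i => σ⁻¹ • i) (fun i => σ • i) ?_ ?_ ?_ ?_ ?_
    · intro i hi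
      simp only [Finset.mem_filter, Finset.mem_univ, true_and] at hi ⊢
      rw [hmk, hi]
    · intro i hi
      simp only [Finset.mem_filter, Finset.mem_univ, true_and] at hi ⊢
      rw [hmk, hi]
    · intro i _; simp
    · intro i _; simp
    · intro i _; rfl
  have hneg2 : ∀ a : ZMod 2, -a = a := by decide
  have hBker : Bsp ≤ LinearMap.ker φ := by
    rw [hBdef]
    rw [Submodule.span_le]
    rintro x ⟨σ, y, rfl⟩
    simp only [SetLike.mem_coe, LinearMap.mem_ker, map_sub, sub_eq_zero]
    funext q
    rw [hφcast, hφcast]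
    have hyy : ∀ i : I, (ρ σ y).1 i
        = if σ ∈ N then y.1 (σ⁻¹ • i) else -y.1 (σ⁻¹ • i) - y.2.1 :=
      fun i => hfst σ y.1 y.2.1 y.2.2 i
    rw [Int.cast_sum, Int.cast_sum]
    by_cases hσ : σ ∈ N
    · rw [Finset.sum_congr rfl fun i _ => by rw [hyy i, if_pos hσ]]
      exact hbij σ q (fun i => ((y.1 i : ℤ) : ZMod 2))
    · rw [Finset.sum_congr rfl fun i _ => by rw [hyy i, if_neg hσ]]
      have hstep : ∀ i : I, (((-y.1 (σ⁻¹ • i) - y.2.1 : ℤ)) : ZMod 2)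
          = -((y.1 (σ⁻¹ • i) : ℤ) : ZMod 2) - ((y.2.1 : ℤ) : ZMod 2) := by
        intro i; push_cast; ring
      rw [Finset.sum_congr rfl fun i _ => hstep i, Finset.sum_sub_distrib,
        Finset.sum_neg_distrib, hbij σ q (fun i => ((y.1 i : ℤ) : ZMod 2)),
        Finset.sum_const, nsmul_eq_mul]
      have hc0 : ((Finset.univ.filter (fun i : I => (Quotient.mk'' i : Q) = q)).card : ZMod 2) = 0 := by
        obtain ⟨k, hk⟩ := hfib_even q
        rw [hk, show k + k = 2 * k by ring]
        push_cast
        rw [show (2 : ZMod 2) = 0 by decide]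
        ring
      rw [hc0, hneg2]
      ring
  -- total fiber sum
  have hfibersum : ∀ v : I → ℤ, (∑ q : Q, ∑ i ∈ Finset.univ.filter
      (fun i : I => (Quotient.mk'' i : Q) = q), v i) = ∑ i : I, v i :=
    fun v => Finset.sum_fiberwise_of_maps_to (fun i _ => Finset.mem_univ _) v
  have hrange1 : ∀ x ∈ LinearMap.ker T, (∑ q : Q, φ x q) = 0 := by
    intro x hx
    obtain ⟨hc, hd⟩ := (hker_iff x.1 x.2.1 x.2.2).1 hx
    rw [Finset.sum_congr rfl fun q _ => hφcast x q, ← Int.cast_sum, hfibersum x.1,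
      show (∑ i : I, x.1 i) = 2 * (-x.2.2) by omega, Int.cast_mul,
      show ((2:ℤ) : ZMod 2) = 0 by decide]
    ring
  -- elements realizing pair indicators
  have hz_mem : ∀ a b : I, auxE I a - auxE I b ∈ LinearMap.ker T := by
    intro a b
    have he : auxE I a - auxE I b
        = (fun j => (if j = a then (1:ℤ) else 0) - (if j = b then 1 else 0), (0:ℤ), (0:ℤ)) := by
      refine Prod.ext rfl (Prod.ext (by show (0:ℤ) - 0 = 0; ring) (by show (0:ℤ) - 0 = 0; ring))
    rw [he]
    refine (hker_iff _ 0 0).2 ⟨rfl, ?_⟩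
    rw [Finset.sum_sub_distrib]
    simp [Finset.sum_ite_eq']
  have hφz : ∀ q0 q p : Q, φ (auxE I (Quotient.out q) - auxE I (Quotient.out q0)) p
      = (if q = p then 1 else 0) - (if q0 = p then 1 else 0) := by
    intro q0 q p
    rw [hφcast]
    have h1 : ∀ a : I, (∑ i ∈ Finset.univ.filter (fun i : I => (Quotient.mk'' i : Q) = p),
        (if i = a then (1:ℤ) else 0)) = if (Quotient.mk'' a : Q) = p then 1 else 0 := by
      intro a
      rw [Finset.sum_ite_eq' (Finset.univ.filter (fun i : I => (Quotient.mk'' i : Q) = p))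
        a (fun _ => (1:ℤ))]
      simp [Finset.mem_filter]
    have h2 : (∑ i ∈ Finset.univ.filter (fun i : I => (Quotient.mk'' i : Q) = p),
        (auxE I (Quotient.out q) - auxE I (Quotient.out q0)).1 i)
        = (if q = p then (1:ℤ) else 0) - (if q0 = p then 1 else 0) := by
      rw [Finset.sum_congr rfl (fun i _ => show (auxE I (Quotient.out q) - auxE I (Quotient.out q0)).1 i
        = (if i = (Quotient.out q) then (1:ℤ) else 0) - (if i = (Quotient.out q0) then 1 else 0) from rfl)]
      rw [Finset.sum_sub_distrib, h1, h1]
      have e1 : (Quotient.mk'' (Quotient.out q) : Q) = q := Quotient.out_eq' q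
      have e2 : (Quotient.mk'' (Quotient.out q0) : Q) = q0 := Quotient.out_eq' q0
      rw [e1, e2]
    rw [h2]
    simp only [Int.cast_sub, apply_ite (fun z : ℤ => (z : ZMod 2)), Int.cast_one, Int.cast_zero]
  have hsurj : ∀ w : Q → ZMod 2, (∑ p : Q, w p) = 0 →
      ∃ x : (I → ℤ) × ℤ × ℤ, x ∈ LinearMap.ker T ∧ φ x = w := by
    intro w hw
    rcases isEmpty_or_nonempty Q with hQ | hQ
    · refine ⟨0, Submodule.zero_mem _, ?_⟩
      funext p
      exact absurd ⟨p⟩ (not_nonempty_iff.2 hQ)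
    · obtain ⟨q0⟩ := hQ
      refine ⟨∑ q : Q, ((w q).val : ℤ) • (auxE I (Quotient.out q) - auxE I (Quotient.out q0)),
        Submodule.sum_mem _ fun q _ => Submodule.smul_mem _ _ (hz_mem _ _), ?_⟩
      funext p
      rw [map_sum, Finset.sum_apply]
      have hterm : ∀ q : Q, (φ (((w q).val : ℤ) • (auxE I (Quotient.out q) - auxE I (Quotient.out q0)))) p
          = (w q) * ((if q = p then 1 else 0) - (if q0 = p then 1 else 0)) := by
        intro q
        rw [map_smul]
        have h3 : ((((w q).val : ℤ)) • φ (auxE I (Quotient.out q) - auxE I (Quotient.out q0))) p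
            = ((w q).val : ℤ) • (φ (auxE I (Quotient.out q) - auxE I (Quotient.out q0)) p) := rfl
        rw [h3, hφz q0 q p, zsmul_eq_mul]
        congr 1
        push_cast
        rw [ZMod.natCast_val, ZMod.cast_id]
      rw [Finset.sum_congr rfl fun q _ => hterm q]
      rw [Finset.sum_congr rfl fun q _ => mul_sub (w q) _ _, Finset.sum_sub_distrib]
      simp only [mul_ite, mul_one, mul_zero]
      by_cases hp : q0 = p <;>
        simp [hp, hw, Finset.sum_ite_eq'] <;>
        exact (Finset.sum_eq_single p (fun b _ hb => if_neg hb)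
          (fun h => absurd (Finset.mem_univ p) h)).trans (if_pos rfl)
  -- final assembly
  let Φ : LinearMap.ker T →ₗ[ℤ] (Q → ZMod 2) := φ.comp (LinearMap.ker T).subtype
  have hkerΦ : LinearMap.ker Φ = Bsp.comap (LinearMap.ker T).subtype := by
    ext x
    simp only [LinearMap.mem_ker, Submodule.mem_comap, LinearMap.comp_apply,
      Submodule.subtype_apply]
    constructor
    · intro h
      obtain ⟨hc, hd⟩ := (hker_iff x.1.1 x.1.2.1 x.1.2.2).1 x.2
      have hx1 : (x : (I → ℤ) × ℤ × ℤ) = (x.1.1, (0:ℤ), x.1.2.2) := by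
        rw [← hc]
      rw [hx1]
      refine hcrux x.1.1 x.1.2.2 ?_ ?_
      · omega
      · intro q
        have h2 : φ (x : (I → ℤ) × ℤ × ℤ) q = 0 := by
          have h3 := congrFun h q
          exact h3
        rw [← hφcast]
        exact h2
    · intro h
      exact LinearMap.mem_ker.1 (hBker h)
  have hrangeΦ : ∀ w : Q → ZMod 2, w ∈ LinearMap.range Φ ↔ (∑ p : Q, w p) = 0 := by
    intro w
    constructor
    · rintro ⟨x, rfl⟩
      exact hrange1 x.1 x.2
    · intro hw
      obtain ⟨x, hxT, hφx⟩ := hsurj w hw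
      exact ⟨⟨x, hxT⟩, hφx⟩
  let sumL : (Q → ZMod 2) →ₗ[ZMod 2] ZMod 2 :=
    { toFun := fun w => ∑ p : Q, w p
      map_add' := fun a b => Finset.sum_add_distrib
      map_smul' := fun z a => by
        show (∑ p : Q, (z • a) p) = z • ∑ p : Q, a p
        simp [Finset.mul_sum] }
  have e1 : (LinearMap.ker T ⧸ Bsp.comap (LinearMap.ker T).subtype)
      ≃ₗ[ℤ] LinearMap.range Φ :=
    (Submodule.quotEquivOfEq _ _ hkerΦ.symm).trans (LinearMap.quotKerEquivRange Φ)
  have e2 : (LinearMap.range Φ) ≃+ LinearMap.ker sumL :=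
    { toFun := fun x => ⟨x.1, LinearMap.mem_ker.2 ((hrangeΦ x.1).1 x.2)⟩
      invFun := fun x => ⟨x.1, (hrangeΦ x.1).2 (LinearMap.mem_ker.1 x.2)⟩
      left_inv := fun x => Subtype.ext rfl
      right_inv := fun x => Subtype.ext rfl
      map_add' := fun x y => Subtype.ext rfl }
  have hQcard : Fintype.card Q = r' := by
    rw [← Nat.card_eq_fintype_card]
    exact hr'
  have hfinrank : Module.finrank (ZMod 2) (LinearMap.ker sumL) = r' - 1 := by
    rcases isEmpty_or_nonempty Q with hQ | hQ
    · have h0 : Module.finrank (ZMod 2) (Q → ZMod 2) = 0 := by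
        rw [Module.finrank_pi]
        simp
      have hle := Submodule.finrank_le (LinearMap.ker sumL)
      have hr0 : r' = 0 := by
        rw [← hQcard]
        simp
      omega
    · have hr1 : 1 ≤ r' := by
        rw [← hQcard]
        exact Fintype.card_pos
      have hsur : LinearMap.range sumL = ⊤ := by
        rw [LinearMap.range_eq_top]
        intro z
        obtain ⟨p0⟩ := hQ
        refine ⟨fun p => if p = p0 then z else 0, ?_⟩
        show (∑ p : Q, if p = p0 then z else 0) = z
        rw [Finset.sum_ite_eq' Finset.univ p0 (fun _ => z)]
        simp
      have hrn := LinearMap.finrank_range_add_finrank_ker sumL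
      rw [hsur, finrank_top, Module.finrank_self, Module.finrank_pi, hQcard] at hrn
      omega
  have e3 : (LinearMap.ker sumL) ≃ₗ[ZMod 2] (Fin (r' - 1) → ZMod 2) :=
    LinearEquiv.ofFinrankEq _ _ (by
      rw [hfinrank, Module.finrank_pi]
      simp)
  exact ⟨e1.toAddEquiv.trans (e2.trans e3.toAddEquiv)⟩
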